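/- Let a, b, c, d be complex numbers and 1 ≤ p ≤ 2. Then the Schatten p-norm of the 2×2 matrix [[a,b],[c,d]] is at least the Schatten p-norm of the 2×2 matrix [[|a|,|b|],[|c|,|d|]]. For p ≥ 2 the inequality is reversed. -/

import Mathlib

open scoped Matrix
open Set

lemma smoothing_concave {x y x' y' : ℝ} (hy' : 0 ≤ y') (h1 : y' ≤ y) (h2 : y ≤ x) (h3 : x ≤ x')
    {f : ℝ → ℝ} (hf : ConcaveOn ℝ (Set.Ici 0) f) (hsum : x + y = x' + y') :
    f x' + f y' ≤ f x + f y := by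
  rcases eq_or_lt_of_le ((h1.trans h2).trans h3) with h | h
  · have hx : x = x' := by linarith
    have hy : y = y' := by linarith
    rw [hx, hy]
  · set t : ℝ := (x - y') / (x' - y') with ht
    have hne : x' - y' ≠ 0 := by linarith
    have ht0 : 0 ≤ t := div_nonneg (by linarith) (by linarith)
    have ht1 : t ≤ 1 := (div_le_one (by linarith)).2 (by linarith)
    have hx'm : x' ∈ Set.Ici (0:ℝ) := le_trans hy' h.le
    have hy'm : y' ∈ Set.Ici (0:ℝ) := hy'
    have e1 : t • x' + (1 - t) • y' = x := by
      simp only [smul_eq_mul, ht]; field_simp; ring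
    have e2 : (1 - t) • x' + t • y' = y := by
      simp only [smul_eq_mul] at e1 ⊢; linear_combination -hsum - e1
    have i1 := hf.2 hx'm hy'm ht0 (by linarith : (0:ℝ) ≤ 1 - t) (by ring)
    have i2 := hf.2 hx'm hy'm (by linarith : (0:ℝ) ≤ 1 - t) ht0 (by ring)
    rw [e1] at i1
    rw [e2] at i2
    simp only [smul_eq_mul] at i1 i2
    nlinarith [i1, i2]

lemma pair_cmp {e0 e1 f0 f1 : ℝ} (he0 : 0 ≤ e0) (he1 : 0 ≤ e1) (hf0 : 0 ≤ f0) (hf1 : 0 ≤ f1)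
    (hsum : e0 + e1 = f0 + f1) (hprod : f0 * f1 ≤ e0 * e1) (q : ℝ) :
    (0 ≤ q → q ≤ 1 → f0 ^ q + f1 ^ q ≤ e0 ^ q + e1 ^ q) ∧
    (1 ≤ q → e0 ^ q + e1 ^ q ≤ f0 ^ q + f1 ^ q) := by
  set x := max e0 e1
  set y := min e0 e1
  set x' := max f0 f1
  set y' := min f0 f1
  have hxy : x + y = e0 + e1 := max_add_min e0 e1
  have hxy' : x' + y' = f0 + f1 := max_add_min f0 f1
  have hpxy : x * y = e0 * e1 := max_mul_min e0 e1
  have hpxy' : x' * y' = f0 * f1 := max_mul_min f0 f1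
  have hy' : 0 ≤ y' := le_min hf0 hf1
  have h2 : y ≤ x := min_le_max
  have h2' : y' ≤ x' := min_le_max
  have hsum' : x + y = x' + y' := by rw [hxy, hxy', hsum]
  have hprod' : x' * y' ≤ x * y := by rw [hpxy, hpxy']; exact hprod
  have hy0 : 0 ≤ y := le_min he0 he1
  have hd : (x - y) ^ 2 ≤ (x' - y') ^ 2 := by nlinarith
  have h3 : x ≤ x' := by nlinarith [h2, h2', hsum']
  have h1 : y' ≤ y := by linarith
  have key : ∀ f : ℝ → ℝ, ConcaveOn ℝ (Set.Ici 0) f → f x' + f y' ≤ f x + f y :=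
    fun f hf => smoothing_concave hy' h1 h2 h3 hf hsum'
  have hex : e0 ^ q + e1 ^ q = x ^ q + y ^ q := by
    rcases le_total e0 e1 with h | h
    · simp [x, y, max_eq_right h, min_eq_left h, add_comm]
    · simp [x, y, max_eq_left h, min_eq_right h]
  have hfx : f0 ^ q + f1 ^ q = x' ^ q + y' ^ q := by
    rcases le_total f0 f1 with h | h
    · simp [x', y', max_eq_right h, min_eq_left h, add_comm]
    · simp [x', y', max_eq_left h, min_eq_right h]
  constructor
  · intro hq0 hq1
    rw [hex, hfx]
    exact key _ (Real.concaveOn_rpow hq0 hq1)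
  · intro hq1
    rw [hex, hfx]
    have := key (fun t => -(t ^ q)) (convexOn_rpow hq1).neg
    linarith

lemma sum_eigs {n : Type*} [Fintype n] [DecidableEq n] {A : Matrix n n ℂ} (hA : A.IsHermitian) :
    ((∑ i, hA.eigenvalues i : ℝ) : ℂ) = A.trace := by
  rw [hA.trace_eq_sum_eigenvalues]
  push_cast
  rfl

lemma trace_fin2 (a b c d : ℂ) :
    ((!![a,b;c,d]ᴴ * !![a,b;c,d]).trace
      = ((‖a‖ ^ 2 + ‖b‖ ^ 2 + ‖c‖ ^ 2 + ‖d‖ ^ 2 : ℝ) : ℂ)) := by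
  simp [Matrix.trace_fin_two, Matrix.mul_apply, Fin.sum_univ_two, Matrix.conjTranspose_apply]
  simp [mul_comm, Complex.mul_conj, ← Complex.ofReal_pow, Complex.sq_norm]
  ring

lemma det_fin2 (a b c d : ℂ) :
    ((!![a,b;c,d]ᴴ * !![a,b;c,d]).det = ((‖a*d - b*c‖ ^ 2 : ℝ) : ℂ)) := by
  rw [Matrix.det_mul, Matrix.det_conjTranspose, Matrix.det_fin_two_of]
  rw [Complex.star_def, mul_comm, Complex.mul_conj, Complex.sq_norm]

open scoped Matrix

/-- The Schatten `p`-norm `(Tr (M* M)^{p/2})^{1/p}` of a complex matrix,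
defined via the eigenvalues of the positive semidefinite matrix `Mᴴ * M`. -/
noncomputable def schattenNorm {n : Type*} [Fintype n] [DecidableEq n]
    (p : ℝ) (M : Matrix n n ℂ) : ℝ :=
  (∑ i, (Matrix.isHermitian_conjTranspose_mul_self M).eigenvalues i ^ (p / 2)) ^ (1 / p)

theorem schatten_abs_entries (a b c d : ℂ) (p : ℝ) :
    (1 ≤ p → p ≤ 2 →
      schattenNorm p !![(‖a‖ : ℂ), (‖b‖ : ℂ);
                        (‖c‖ : ℂ), (‖d‖ : ℂ)] ≤
        schattenNorm p !![a, b; c, d]) ∧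
    (2 ≤ p →
      schattenNorm p !![a, b; c, d] ≤
        schattenNorm p !![(‖a‖ : ℂ), (‖b‖ : ℂ);
                          (‖c‖ : ℂ), (‖d‖ : ℂ)]) := by
  set M : Matrix (Fin 2) (Fin 2) ℂ := !![a, b; c, d] with hM
  set N : Matrix (Fin 2) (Fin 2) ℂ :=
    !![(‖a‖ : ℂ), (‖b‖ : ℂ); (‖c‖ : ℂ), (‖d‖ : ℂ)] with hN
  set HM := Matrix.isHermitian_conjTranspose_mul_self M with hHM
  set HN := Matrix.isHermitian_conjTranspose_mul_self N with hHN
  set e0 := HM.eigenvalues 0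
  set e1 := HM.eigenvalues 1
  set f0 := HN.eigenvalues 0
  set f1 := HN.eigenvalues 1
  have he0 : 0 ≤ e0 := Matrix.eigenvalues_conjTranspose_mul_self_nonneg M 0
  have he1 : 0 ≤ e1 := Matrix.eigenvalues_conjTranspose_mul_self_nonneg M 1
  have hf0 : 0 ≤ f0 := Matrix.eigenvalues_conjTranspose_mul_self_nonneg N 0
  have hf1 : 0 ≤ f1 := Matrix.eigenvalues_conjTranspose_mul_self_nonneg N 1
  -- traces
  have htrM : ((e0 + e1 : ℝ) : ℂ) = (Mᴴ * M).trace := by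
    have := sum_eigs HM
    rwa [Fin.sum_univ_two] at this
  have htrN : ((f0 + f1 : ℝ) : ℂ) = (Nᴴ * N).trace := by
    have := sum_eigs HN
    rwa [Fin.sum_univ_two] at this
  have habs : ∀ z : ℂ, ‖((‖z‖ : ℝ) : ℂ)‖ = ‖z‖ := by
    intro z; rw [Complex.norm_real, Real.norm_eq_abs, abs_of_nonneg (norm_nonneg z)]
  have hsum : e0 + e1 = f0 + f1 := by
    have h1 := htrM
    have h2 := htrN
    rw [hM, trace_fin2] at h1
    rw [hN, trace_fin2] at h2
    rw [habs, habs, habs, habs] at h2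
    exact_mod_cast h1.trans h2.symm
  -- determinants
  have hdetM : ((e0 * e1 : ℝ) : ℂ) = (Mᴴ * M).det := by
    have := HM.det_eq_prod_eigenvalues
    rw [Fin.prod_univ_two] at this
    rw [this]; push_cast; rfl
  have hdetN : ((f0 * f1 : ℝ) : ℂ) = (Nᴴ * N).det := by
    have := HN.det_eq_prod_eigenvalues
    rw [Fin.prod_univ_two] at this
    rw [this]; push_cast; rfl
  have heprod : e0 * e1 = ‖a * d - b * c‖ ^ 2 := by
    have := hdetM
    rw [hM, det_fin2] at this
    exact_mod_cast this
  have hfprod : f0 * f1 = (‖a‖ * ‖d‖ - ‖b‖ * ‖c‖) ^ 2 := by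
    have := hdetN
    rw [hN, det_fin2] at this
    rw [show ((‖a‖ : ℝ) : ℂ) * ((‖d‖ : ℝ) : ℂ)
        - ((‖b‖ : ℝ) : ℂ) * ((‖c‖ : ℝ) : ℂ)
        = ((‖a‖ * ‖d‖ - ‖b‖ * ‖c‖ : ℝ) : ℂ) by push_cast; ring,
      Complex.norm_real, Real.norm_eq_abs] at this
    have := (Complex.ofReal_inj.mp this)
    rw [this, sq_abs]
  have hprod : f0 * f1 ≤ e0 * e1 := by
    rw [heprod, hfprod]
    have h1 : ‖a‖ * ‖d‖ - ‖b‖ * ‖c‖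
        ≤ ‖a * d - b * c‖ := by
      rw [← norm_mul, ← norm_mul]
      linarith [abs_norm_sub_norm_le (a * d) (b * c),
        le_abs_self (‖a*d‖ - ‖b*c‖)]
    have h2 : -(‖a * d - b * c‖) ≤ ‖a‖ * ‖d‖ - ‖b‖ * ‖c‖ := by
      rw [← norm_mul, ← norm_mul]
      have := abs_norm_sub_norm_le (a * d) (b * c)
      have := abs_le.mp this
      linarith [this.1]
    exact sq_le_sq' h2 h1
  have hSM : schattenNorm p M = (e0 ^ (p/2) + e1 ^ (p/2)) ^ (1/p) := by
    rw [schattenNorm, Fin.sum_univ_two]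
  have hSN : schattenNorm p N = (f0 ^ (p/2) + f1 ^ (p/2)) ^ (1/p) := by
    rw [schattenNorm, Fin.sum_univ_two]
  constructor
  · intro hp1 hp2
    have hkey := (pair_cmp he0 he1 hf0 hf1 hsum hprod (p/2)).1 (by linarith) (by linarith)
    rw [hSM, hSN]
    exact Real.rpow_le_rpow
      (add_nonneg (Real.rpow_nonneg hf0 _) (Real.rpow_nonneg hf1 _)) hkey
      (by positivity)
  · intro hp2
    have hkey := (pair_cmp he0 he1 hf0 hf1 hsum hprod (p/2)).2 (by linarith)
    rw [hSM, hSN]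
    exact Real.rpow_le_rpow
      (add_nonneg (Real.rpow_nonneg he0 _) (Real.rpow_nonneg he1 _)) hkey
      (by positivity)
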